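/- Let C be a small category such that (1) every morphism factors as a split epimorphism followed by a monomorphism and (2) C satisfies the ascending chain condition. Let I be an idempotent ideal of morphisms of C. Then a morphism f of C belongs to I if and only if f factors through some object B of C with id_B ∈ I. -/

import Mathlib

open CategoryTheory Opposite

universe w v u

namespace PaperEtendue

/-- An element `w` of a Heyting algebra is *widespread* if the lattice of elements
above `w` is complemented. -/
def Widespread {H : Type u} [HeytingAlgebra H] (w : H) : Prop :=
  ∀ v : H, w ≤ v → ∃ v' : H, w ≤ v' ∧ v ⊔ v' = ⊤ ∧ v ⊓ v' = w

/-- An object is *minimal* if every morphism with that domain is a monomorphism. -/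
def Minimal {C : Type u} [Category.{v} C] (c : C) : Prop :=
  ∀ ⦃d : C⦄ (f : c ⟶ d), Mono f

/-- An object is *preterminal* if there is at most one morphism into it from any object. -/
def Preterminal {C : Type u} [Category.{v} C] (c : C) : Prop :=
  ∀ ⦃b : C⦄ (u v : b ⟶ c), u = v

/-- The category of elements `C/X` of a presheaf `X`: objects are pairs `(x, D)`
with `x ∈ X(D)`. -/
structure Elem {C : Type u} [Category.{v} C] (X : Cᵒᵖ ⥤ Type w) : Type max u w where
  base : C
  elt : X.obj (op base)

/-- Morphisms `(x, D) → (y, E)` in `C/X` are morphisms `f : D → E` of `C` with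
`X(f)(y) = x`. -/
instance {C : Type u} [Category.{v} C] (X : Cᵒᵖ ⥤ Type w) : Category (Elem X) where
  Hom a b := {f : a.base ⟶ b.base // X.map f.op b.elt = a.elt}
  id a := ⟨𝟙 a.base, by simp⟩
  comp {a b c} f g := ⟨f.1 ≫ g.1, by
    rw [op_comp, FunctorToTypes.map_comp_apply, g.2, f.2]⟩
  id_comp f := Subtype.ext (Category.id_comp f.1)
  comp_id f := Subtype.ext (Category.comp_id f.1)
  assoc f g h := Subtype.ext (Category.assoc f.1 g.1 h.1)

/-- A presheaf is *strongly regular* if for every monomorphism of `C/X`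
with minimal codomain, the domain is also minimal. -/
def StronglyRegular {C : Type u} [Category.{v} C] (X : Cᵒᵖ ⥤ Type w) : Prop :=
  ∀ ⦃a b : Elem X⦄ (m : a ⟶ b), Mono m → Minimal b → Minimal a

/-- A presheaf is *non-singular* if every minimal object of `C/X` is preterminal. -/
def NonSingular {C : Type u} [Category.{v} C] (X : Cᵒᵖ ⥤ Type w) : Prop :=
  ∀ a : Elem X, Minimal a → Preterminal a

/-- Every morphism factors as a split epimorphism followed by a monomorphism. -/
def SplitEpiMonoFact (C : Type u) [Category.{v} C] : Prop :=
  ∀ ⦃a b : C⦄ (f : a ⟶ b), ∃ (c : C) (e : a ⟶ c) (m : c ⟶ b),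
    IsSplitEpi e ∧ Mono m ∧ e ≫ m = f

/-- Every morphism factors as a strong epimorphism followed by a monomorphism. -/
def StrongEpiMonoFact (C : Type u) [Category.{v} C] : Prop :=
  ∀ ⦃a b : C⦄ (f : a ⟶ b), ∃ (c : C) (e : a ⟶ c) (m : c ⟶ b),
    StrongEpi e ∧ Mono m ∧ e ≫ m = f

/-- The ascending chain condition: every `ℕ`-indexed chain of monomorphisms lying
over a fixed object via compatible monomorphisms contains an isomorphism. -/
def AscendingChainCondition (C : Type u) [Category.{v} C] : Prop :=
  ∀ (obj : ℕ → C) (c : C) (m : ∀ k : ℕ, obj k ⟶ obj (k + 1)) (i : ∀ k : ℕ, obj k ⟶ c),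
    (∀ k, Mono (m k)) → (∀ k, Mono (i k)) → (∀ k, m k ≫ i (k + 1) = i k) →
    ∃ t : ℕ, IsIso (m t)

/-- A category is *well-founded* if every `ℕ`-indexed chain of strong epimorphisms
is eventually constant. -/
def WellFoundedCat (C : Type u) [Category.{v} C] : Prop :=
  ∀ (obj : ℕ → C) (e : ∀ k : ℕ, obj k ⟶ obj (k + 1)),
    (∀ k, StrongEpi (e k)) → ∃ k : ℕ, ∀ m : ℕ, k ≤ m → IsIso (e m)

/-- `𝔥 c ≤ n`: in every sequence of `n+1` composable monomorphisms ending at `c`,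
at least one is an isomorphism. -/
def HeightLE {C : Type u} [Category.{v} C] (c : C) (n : ℕ) : Prop :=
  ∀ (obj : Fin (n + 2) → C) (f : ∀ i : Fin (n + 1), obj i.succ ⟶ obj i.castSucc),
    (∀ i, Mono (f i)) → obj 0 = c → ∃ i, IsIso (f i)

/-- Every sequence of `n+1` composable morphisms in `C` contains an isomorphism. -/
def ChainsContainIso (C : Type u) [Category.{v} C] (n : ℕ) : Prop :=
  ∀ (obj : Fin (n + 2) → C) (f : ∀ i : Fin (n + 1), obj i.succ ⟶ obj i.castSucc),
    ∃ i, IsIso (f i)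

/-- The full subcategory of `C/X` determined by the minimal objects. -/
abbrev MinimalElems {C : Type u} [Category.{v} C] (X : Cᵒᵖ ⥤ Type w) :=
  ObjectProperty.FullSubcategory (fun a : Elem X => Minimal a)

/-- A morphism factors through an object of height below `n`. -/
def FactorsThroughHeightLE {C : Type u} [Category.{v} C] {a b : C} (f : a ⟶ b) (n : ℕ) : Prop :=
  ∃ (c : C) (v : a ⟶ c) (u : c ⟶ b), HeightLE c n ∧ v ≫ u = f

/-- `dim X ≤ n`: every element of `X` is the restriction of an element along a morphism
factoring through an object of height below `n` (i.e. `X` is `n`-skeletal). -/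
def DimLE {C : Type u} [Category.{v} C] (X : Cᵒᵖ ⥤ Type w) (n : ℕ) : Prop :=
  ∀ (D : C) (x : X.obj (op D)), ∃ (E : C) (f : D ⟶ E) (y : X.obj (op E)),
    FactorsThroughHeightLE f n ∧ X.map f.op y = x

/-- A two-sided ideal of morphisms of a category. -/
def IsIdeal {C : Type u} [Category.{v} C] (I : MorphismProperty C) : Prop :=
  ∀ ⦃a b c d : C⦄ (h : a ⟶ b) (f : b ⟶ c) (g : c ⟶ d), I f → I (h ≫ f ≫ g)

/-- An idempotent ideal: every member factors as a composite of two members. -/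
def IsIdempotentIdeal {C : Type u} [Category.{v} C] (I : MorphismProperty C) : Prop :=
  IsIdeal I ∧ ∀ ⦃a b : C⦄ (f : a ⟶ b), I f →
    ∃ (c : C) (h : a ⟶ c) (g : c ⟶ b), I h ∧ I g ∧ h ≫ g = f

/-- The implication sieve `V ⇒ W`. -/
def sieveImp {C : Type u} [Category.{v} C] {D : C} (V W : Sieve D) : Sieve D where
  arrows F h := ∀ ⦃G : C⦄ (g : G ⟶ F), V.arrows (g ≫ h) → W.arrows (g ≫ h)
  downward_closed := by
    intro F F' h hh g G' g' hv
    have := hh (g' ≫ g) (by simpa using hv)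
    simpa using this

/-- `W` is a subpresheaf of `X` given as a family of subsets closed under the action. -/
def IsSubpresheaf {C : Type u} [Category.{v} C] (X : Cᵒᵖ ⥤ Type w)
    (W : ∀ D : Cᵒᵖ, Set (X.obj D)) : Prop :=
  ∀ ⦃D E : Cᵒᵖ⦄ (f : D ⟶ E) ⦃x : X.obj D⦄, x ∈ W D → X.map f x ∈ W E

/-- The implication subpresheaf `(V ⇒ W)(D)`. -/
def impSet {C : Type u} [Category.{v} C] (X : Cᵒᵖ ⥤ Type w)
    (V W : ∀ D : Cᵒᵖ, Set (X.obj D)) (D : Cᵒᵖ) : Set (X.obj D) :=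
  {x | ∀ ⦃E : Cᵒᵖ⦄ (f : D ⟶ E), X.map f x ∈ V E → X.map f x ∈ W E}

/-- `Ξ_k`: the image subpresheaf of the map `C(-, K) → X` corresponding to `k`. -/
def xiSet {C : Type u} [Category.{v} C] (X : Cᵒᵖ ⥤ Type w) {K : C} (k : X.obj (op K))
    (J : Cᵒᵖ) : Set (X.obj J) :=
  {j | ∃ g : op K ⟶ J, X.map g k = j}

theorem idempotentIdeal_mem_iff_factors_through_unit {C : Type u} [Category.{v} C]
    (hfact : SplitEpiMonoFact C) (hacc : AscendingChainCondition C)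
    (I : MorphismProperty C) (hI : IsIdempotentIdeal I)
    {a b : C} (f : a ⟶ b) :
    I f ↔ ∃ (B : C) (u : a ⟶ B) (v : B ⟶ b), I (𝟙 B) ∧ u ≫ v = f := by
  constructor
  · intro hf
    -- key step: any mono `i : c ⟶ b` in `I` factors as a mono in `I` followed by a
    -- mono into `b` in `I`.
    have step : ∀ {c : C} (i : c ⟶ b), Mono i → I i →
        ∃ (c' : C) (n : c ⟶ c') (i' : c' ⟶ b),
          Mono n ∧ I n ∧ Mono i' ∧ I i' ∧ n ≫ i' = i := by
      intro c i hmono hi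
      obtain ⟨x, h, g, hh, hg, hcomp⟩ := hI.2 i hi
      obtain ⟨c', e, m', he, hm', hfac⟩ := hfact g
      obtain ⟨⟨s, hs⟩⟩ := he.exists_splitEpi
      have hne : (h ≫ e) ≫ m' = i := by rw [Category.assoc, hfac, hcomp]
      have hm'I : I m' := by
        have : s ≫ g = m' := by rw [← hfac, ← Category.assoc, hs, Category.id_comp]
        have h2 := hI.1 s g (𝟙 b) hg
        simpa [this] using h2
      have hnI : I (h ≫ e) := by
        have h2 := hI.1 (𝟙 c) h e hh
        simpa using h2
      have hnm : Mono (h ≫ e) := by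
        have : Mono ((h ≫ e) ≫ m') := by rw [hne]; exact hmono
        exact mono_of_mono (h ≫ e) m'
      exact ⟨c', h ≫ e, m', hnm, hnI, hm', hm'I, hne⟩
    -- initial factorization of `f` through a mono in `I`
    obtain ⟨x, h, g, hh, hg, hcomp⟩ := hI.2 f hf
    obtain ⟨c0, e, i0, he, hi0mono, hfac0⟩ := hfact g
    obtain ⟨⟨s, hs⟩⟩ := he.exists_splitEpi
    have hi0I : I i0 := by
      have hsg : s ≫ g = i0 := by rw [← hfac0, ← Category.assoc, hs, Category.id_comp]
      have h2 := hI.1 s g (𝟙 b) hg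
      simpa [hsg] using h2
    have hfac0' : (h ≫ e) ≫ i0 = f := by rw [Category.assoc, hfac0, hcomp]
    -- build the ascending chain
    have hstep' : ∀ p : Σ' (c : C) (i : c ⟶ b), Mono i ∧ I i,
        ∃ q : Σ' (c : C) (i : c ⟶ b), Mono i ∧ I i,
          ∃ n : p.1 ⟶ q.1, Mono n ∧ I n ∧ n ≫ q.2.1 = p.2.1 := by
      rintro ⟨c, i, hm, hi⟩
      obtain ⟨c', n, i', hn, hnI, hi'm, hi'I, hfacn⟩ := step i hm hi
      exact ⟨⟨c', i', hi'm, hi'I⟩, n, hn, hnI, hfacn⟩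
    let D : ℕ → Σ' (c : C) (i : c ⟶ b), Mono i ∧ I i :=
      fun k => Nat.rec ⟨c0, i0, hi0mono, hi0I⟩ (fun _ p => (hstep' p).choose) k
    let n : ∀ k : ℕ, (D k).1 ⟶ (D (k + 1)).1 :=
      fun k => ((hstep' (D k)).choose_spec).choose
    have hn : ∀ k, Mono (n k) ∧ I (n k) ∧ n k ≫ (D (k + 1)).2.1 = (D k).2.1 :=
      fun k => ((hstep' (D k)).choose_spec).choose_spec
    obtain ⟨t, ht⟩ := hacc (fun k => (D k).1) b n (fun k => (D k).2.1)
      (fun k => (hn k).1) (fun k => (D k).2.2.1) (fun k => (hn k).2.2)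
    -- the identity of `(D (t+1)).1` is in `I`
    have hid : I (𝟙 (D (t + 1)).1) := by
      have h2 := hI.1 (inv (n t)) (n t) (𝟙 (D (t + 1)).1) (hn t).2.1
      simpa using h2
    -- `f` factors through each `D k`
    have hw : ∀ k, ∃ w : a ⟶ (D k).1, w ≫ (D k).2.1 = f := by
      intro k
      induction k with
      | zero => exact ⟨h ≫ e, hfac0'⟩
      | succ k ih =>
        obtain ⟨w, hwk⟩ := ih
        exact ⟨w ≫ n k, by rw [Category.assoc, (hn k).2.2, hwk]⟩
    obtain ⟨w, hwf⟩ := hw (t + 1)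
    exact ⟨(D (t + 1)).1, w, (D (t + 1)).2.1, hid, hwf⟩
  · rintro ⟨B, u, v, hid, hf⟩
    have h2 := hI.1 u (𝟙 B) v hid
    simpa [hf] using h2

end PaperEtendue
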